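/- Let q be even and let f : Z_2^m → Z_q be a generalized Boolean function. Suppose there exists a set of k variables x = (x_{j_0},...,x_{j_{k-1}}) (with complementary index set I = {i_0,...,i_{m-k-1}}) such that for each d ∈ Z_2^k the restricted function f|_{x=d} equals (q/2)·Σ_{α=0}^{m-k-2} x_{π_d(α)} x_{π_d(α+1)} + Σ_{α=0}^{m-k-1} c_{d,α} x_{i_α} + c_d for some bijection π_d from {0,...,m-k-1} onto I and constants c_{d,α}, c_d ∈ Z_q. Then the PMEPR of the polyphase vector F associated with f is at most 2^{k+1}: sup_{0 ≤ t < T} |Σ_{i=0}^{2^m-1} F_i e^{2π√(-1)(f_c + i/T)t}|² ≤ 2^{k+1}·2^m. -/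

import Mathlib

open Finset

/-- The binary expansion of `i`, as a point of `ℤ₂^m`. -/
def bits (m : ℕ) (i : ℕ) : Fin m → ZMod 2 := fun j => if Nat.testBit i j.val then 1 else 0

/-- The polyphase vector `F = ξ^f` associated with `f : ℤ₂^m → ℤ_q`, `ξ = e^{2π√-1/q}`. -/
noncomputable def polyVec {q : ℕ} (m : ℕ) (f : (Fin m → ZMod 2) → ZMod q) : ℕ → ℂ :=
  fun i => Complex.exp (2 * Real.pi * Complex.I * ((f (bits m i)).val : ℂ) / (q : ℂ))


noncomputable def Echr (q : ℕ) (a : ZMod q) : ℂ :=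
  Complex.exp (2 * Real.pi * Complex.I * (a.val : ℂ) / (q : ℂ))

lemma Echr_abs (q : ℕ) (a : ZMod q) : ‖Echr q a‖ = 1 := by
  unfold Echr
  rw [Complex.norm_exp]
  have : (2 * ↑Real.pi * Complex.I * (a.val : ℂ) / (q : ℂ)).re = 0 := by
    simp [Complex.div_re, Complex.mul_re, Complex.mul_im]
  rw [this, Real.exp_zero]

lemma Echr_add (q : ℕ) (hq : 0 < q) (a b : ZMod q) :
    Echr q (a + b) = Echr q a * Echr q b := by
  haveI : NeZero q := ⟨hq.ne'⟩
  unfold Echr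
  rw [← Complex.exp_add]
  have hval : ((a + b).val : ℕ) = (a.val + b.val) % q := ZMod.val_add a b
  have hq0 : (q : ℂ) ≠ 0 := Nat.cast_ne_zero.mpr hq.ne'
  have key : (a.val + b.val) = (a+b).val + q * ((a.val + b.val)/q) := by
    rw [hval]; exact (Nat.mod_add_div _ _).symm
  have : (2 * ↑Real.pi * Complex.I * (a.val : ℂ) / q) + (2 * ↑Real.pi * Complex.I * (b.val : ℂ) / q)
      = (2 * ↑Real.pi * Complex.I * (((a+b).val : ℂ)) / q) + ((((a.val + b.val)/q : ℕ) : ℂ)) * (2 * ↑Real.pi * Complex.I) := by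
    have : ((a.val : ℂ) + (b.val : ℂ)) = ((a+b).val : ℂ) + (q : ℂ) * (((a.val + b.val)/q : ℕ) : ℂ) := by
      exact_mod_cast congrArg (Nat.cast : ℕ → ℂ) key
    set A := ((a.val : ℕ) : ℂ) with hA
    set B := ((b.val : ℕ) : ℂ) with hB
    set C := (((a+b).val : ℕ) : ℂ) with hC
    set N := (((a.val + b.val)/q : ℕ) : ℂ) with hN
    rw [← add_div, div_add' _ _ _ hq0, div_left_inj' hq0]
    linear_combination (2 * (Real.pi:ℂ) * Complex.I) * this
  rw [this, Complex.exp_add, Complex.exp_nat_mul_two_pi_mul_I, mul_one]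

lemma Echr_half (q : ℕ) (hq : Even q) (hq1 : 0 < q) :
    Echr q ((q / 2 : ℕ) : ZMod q) = -1 := by
  haveI : NeZero q := ⟨hq1.ne'⟩
  unfold Echr
  have hlt : q / 2 < q := Nat.div_lt_self hq1 one_lt_two
  rw [ZMod.val_natCast_of_lt hlt]
  have h2 : (q / 2 : ℕ) * 2 = q := Nat.div_mul_cancel hq.two_dvd
  have hq0 : (q : ℂ) ≠ 0 := Nat.cast_ne_zero.mpr hq1.ne'
  have : 2 * (Real.pi:ℂ) * Complex.I * ((q/2 : ℕ) : ℂ) / (q : ℂ) = Real.pi * Complex.I := by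
    have : (((q/2 : ℕ)) : ℂ) * 2 = (q : ℂ) := by exact_mod_cast congrArg (Nat.cast : ℕ → ℂ) h2
    rw [div_eq_iff hq0]
    linear_combination (Real.pi:ℂ) * Complex.I * this
  rw [this, Complex.exp_pi_mul_I]



/-- natural-number bit of `j` at position `α`. -/
def bv (j α : ℕ) : ℕ := if Nat.testBit j α then 1 else 0

lemma bv_le_one (j α : ℕ) : bv j α ≤ 1 := by unfold bv; split <;> simp

lemma bits_val (m i : ℕ) (p : Fin m) : (bits m i p).val = bv i p.val := by
  unfold bits bv; split <;> rfl

lemma enc_lt (g : ℕ → ℕ) (hg : ∀ p, g p ≤ 1) (n : ℕ) :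
    ∑ p ∈ range n, g p * 2 ^ p < 2 ^ n := by
  induction n with
  | zero => simp
  | succ n ih =>
    rw [Finset.sum_range_succ, pow_succ]
    have h3 : g n * 2 ^ n ≤ 2 ^ n := by
      simpa using Nat.mul_le_mul_right (2^n) (hg n)
    omega

lemma testBit_enc (g : ℕ → ℕ) (hg : ∀ p, g p ≤ 1) (n : ℕ) :
    ∀ j, Nat.testBit (∑ p ∈ range n, g p * 2 ^ p) j = (decide (j < n) && decide (g j = 1)) := by
  induction n with
  | zero => simp
  | succ n ih =>
    intro j
    rw [Finset.sum_range_succ]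
    have hlt : ∑ p ∈ range n, g p * 2 ^ p < 2 ^ n := enc_lt g hg n
    rcases Nat.lt_or_ge j n with hj | hj
    · -- j < n
      rcases Nat.le_one_iff_eq_zero_or_eq_one.mp (hg n) with h | h
      · simp only [h, Nat.zero_mul, Nat.add_zero]
        rw [ih j]
        simp [Nat.lt_succ_of_lt hj, hj]
      · rw [h, one_mul, Nat.add_comm, Nat.testBit_two_pow_add_gt hj, ih j]
        simp [Nat.lt_succ_of_lt hj, hj]
    · rcases Nat.eq_or_lt_of_le hj with rfl | hj'
      · -- j = n
        rcases Nat.le_one_iff_eq_zero_or_eq_one.mp (hg n) with h | h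
        · simp only [h, Nat.zero_mul, Nat.add_zero]
          rw [Nat.testBit_eq_false_of_lt hlt]
          simp [h]
        · rw [h, one_mul, Nat.add_comm, Nat.testBit_two_pow_add_eq,
            Nat.testBit_eq_false_of_lt hlt]
          simp [h]
      · -- j > n
        have : ∑ p ∈ range n, g p * 2 ^ p + g n * 2 ^ n < 2 ^ j := by
          have h2 : (2:ℕ) ^ (n+1) ≤ 2 ^ j := Nat.pow_le_pow_right (by norm_num) hj'
          have h3 : g n * 2 ^ n ≤ 2 ^ n := by
            simpa using Nat.mul_le_mul_right (2^n) (hg n)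
          have h4 : (2:ℕ) ^ (n+1) = 2 ^ n + 2 ^ n := by ring
          omega
        rw [Nat.testBit_eq_false_of_lt this]
        simp [Nat.le_of_lt hj']
        omega

def encv (m : ℕ) (v : Fin m → ZMod 2) : ℕ :=
  ∑ p ∈ range m, (if h : p < m then (v ⟨p, h⟩).val else 0) * 2 ^ p

lemma encv_coef_le (m : ℕ) (v : Fin m → ZMod 2) (p : ℕ) :
    (if h : p < m then (v ⟨p, h⟩).val else 0) ≤ 1 := by
  split
  · have := ZMod.val_lt (v ⟨p, ‹_›⟩); omega
  · omega

lemma encv_lt (m : ℕ) (v : Fin m → ZMod 2) : encv m v < 2 ^ m :=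
  enc_lt _ (encv_coef_le m v) m

lemma zmod2_val_eq_one (a : ZMod 2) : a.val = 1 ↔ a = 1 := by
  constructor
  · intro h
    have := ZMod.natCast_rightInverse (n := 2) a
    rw [← this, h]; rfl
  · rintro rfl; rfl

lemma bits_encv (m : ℕ) (v : Fin m → ZMod 2) : bits m (encv m v) = v := by
  funext j
  unfold bits encv
  rw [testBit_enc _ (encv_coef_le m v) m j.val]
  rw [dif_pos j.isLt]
  by_cases h : (v j).val = 1
  · rw [if_pos (by simp [j.isLt, h])]
    exact ((zmod2_val_eq_one (v j)).mp h).symm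
  · rw [if_neg (by simp [j.isLt, h])]
    have := ZMod.val_lt (v j)
    have h0 : (v j).val = 0 := by omega
    have := ZMod.natCast_rightInverse (n := 2) (v j)
    rw [← this, h0]; rfl

lemma encv_bits (m : ℕ) (i : ℕ) (hi : i < 2 ^ m) : encv m (bits m i) = i := by
  apply Nat.eq_of_testBit_eq
  intro j
  rw [show encv m (bits m i) = ∑ p ∈ range m, (if h : p < m then (bits m i ⟨p,h⟩).val else 0) * 2^p from rfl,
    testBit_enc _ (encv_coef_le m (bits m i)) m j]
  rcases Nat.lt_or_ge j m with hj | hj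
  · rw [dif_pos hj]
    have hb : (bits m i ⟨j, hj⟩).val = bv i j := bits_val m i ⟨j, hj⟩
    rw [hb]
    unfold bv
    by_cases h : Nat.testBit i j <;> simp [h, hj]
  · have : i < 2 ^ j := lt_of_lt_of_le hi (Nat.pow_le_pow_right (by norm_num) hj)
    rw [Nat.testBit_eq_false_of_lt this]
    simp; omega

/-- transport a sum over `range (2^m)` to a sum over bit vectors. -/
lemma sum_range_two_pow {M : Type*} [AddCommMonoid M] (m : ℕ) (A : ℕ → M) :
    ∑ i ∈ range (2 ^ m), A i = ∑ v : Fin m → ZMod 2, A (encv m v) := by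
  apply Finset.sum_bij' (fun i _ => bits m i) (fun v _ => encv m v)
  · intro i hi; exact Finset.mem_univ _
  · intro v _; exact Finset.mem_range.mpr (encv_lt m v)
  · intro i hi; exact encv_bits m i (Finset.mem_range.mp hi)
  · intro v _; exact bits_encv m v
  · intro i hi; rw [encv_bits m i (Finset.mem_range.mp hi)]



lemma bv_high (j α n : ℕ) (hj : j < 2 ^ n) (h : n ≤ α) : bv j α = 0 := by
  unfold bv
  rw [Nat.testBit_eq_false_of_lt (lt_of_lt_of_le hj (Nat.pow_le_pow_right (by norm_num) h))]
  rfl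

lemma bv_shift (j α n : ℕ) (h : α < n) : bv (2 ^ n + j) α = bv j α := by
  unfold bv; rw [Nat.testBit_two_pow_add_gt h]

lemma bv_shift_top (j n : ℕ) (hj : j < 2 ^ n) : bv (2 ^ n + j) n = 1 := by
  unfold bv
  rw [Nat.testBit_two_pow_add_eq, Nat.testBit_eq_false_of_lt hj]
  rfl

noncomputable def PS (q n : ℕ) (w : ℕ → ℂ) (c : ℕ → ZMod q) (c0 : ZMod q) : ℂ :=
  ∑ j ∈ range (2 ^ n),
    Echr q (((q / 2 : ℕ) : ZMod q) * ((∑ α ∈ range (n - 1), bv j α * bv j (α + 1) : ℕ) : ZMod q)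
          + (∑ α ∈ range n, c α * (bv j α : ZMod q)) + c0)
      * ∏ α ∈ range n, (w α) ^ (bv j α)

lemma PS_congr (q n : ℕ) (w : ℕ → ℂ) (c c' : ℕ → ZMod q) (c0 : ZMod q)
    (h : ∀ α < n, c α = c' α) : PS q n w c c0 = PS q n w c' c0 := by
  unfold PS
  refine Finset.sum_congr rfl fun j _ => ?_
  have hs : (∑ α ∈ range n, c α * (bv j α : ZMod q)) = ∑ α ∈ range n, c' α * (bv j α : ZMod q) :=
    Finset.sum_congr rfl fun α hα => by rw [h α (Finset.mem_range.mp hα)]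
  rw [hs]

lemma PS_succ (q p : ℕ) (hq1 : 0 < q) (w : ℕ → ℂ) (c : ℕ → ZMod q) (c0 : ZMod q) :
    PS q (p + 2) w c c0 =
      PS q (p + 1) w c c0 +
        (w (p + 1) * Echr q (c (p + 1))) *
          PS q (p + 1) w (Function.update c p (c p + ((q / 2 : ℕ) : ZMod q))) c0 := by
  have hsplit : (2 : ℕ) ^ (p + 2) = 2 ^ (p + 1) + 2 ^ (p + 1) := by ring
  unfold PS
  simp only [Nat.add_sub_cancel, show p + 2 - 1 = p + 1 from rfl]
  rw [hsplit, Finset.sum_range_add]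
  congr 1
  · -- first half
    refine Finset.sum_congr rfl fun j hj => ?_
    have hj' : j < 2 ^ (p + 1) := Finset.mem_range.mp hj
    have hbvn : bv j (p + 1) = 0 := bv_high j (p + 1) (p + 1) hj' le_rfl
    have hquad : (∑ α ∈ range (p + 1), bv j α * bv j (α + 1))
        = ∑ α ∈ range p, bv j α * bv j (α + 1) := by
      rw [Finset.sum_range_succ, hbvn, Nat.mul_zero, Nat.add_zero]
    have hlin : (∑ α ∈ range (p + 2), c α * (bv j α : ZMod q))
        = ∑ α ∈ range (p + 1), c α * (bv j α : ZMod q) := by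
      rw [Finset.sum_range_succ, hbvn]
      simp
    have hprod : (∏ α ∈ range (p + 2), (w α) ^ (bv j α))
        = ∏ α ∈ range (p + 1), (w α) ^ (bv j α) := by
      rw [Finset.prod_range_succ, hbvn, pow_zero, mul_one]
    rw [hquad, hlin, hprod]
  · -- second half
    rw [Finset.mul_sum]
    refine Finset.sum_congr rfl fun j hj => ?_
    have hj' : j < 2 ^ (p + 1) := Finset.mem_range.mp hj
    have hquad : (∑ α ∈ range (p + 1), bv (2 ^ (p + 1) + j) α * bv (2 ^ (p + 1) + j) (α + 1))
        = (∑ α ∈ range p, bv j α * bv j (α + 1)) + bv j p := by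
      rw [Finset.sum_range_succ]
      congr 1
      · refine Finset.sum_congr rfl fun α hα => ?_
        have hα' : α < p := Finset.mem_range.mp hα
        rw [bv_shift j α (p + 1) (by omega), bv_shift j (α + 1) (p + 1) (by omega)]
      · rw [bv_shift_top j (p + 1) hj', bv_shift j p (p + 1) (by omega), Nat.mul_one]
    have hlin : (∑ α ∈ range (p + 2), c α * (bv (2 ^ (p + 1) + j) α : ZMod q))
        = (∑ α ∈ range (p + 1), c α * (bv j α : ZMod q)) + c (p + 1) := by
      rw [Finset.sum_range_succ, bv_shift_top j (p + 1) hj']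
      have hs : (∑ α ∈ range (p + 1), c α * (bv (2 ^ (p + 1) + j) α : ZMod q))
          = ∑ α ∈ range (p + 1), c α * (bv j α : ZMod q) :=
        Finset.sum_congr rfl fun α hα => by
          rw [bv_shift j α (p + 1) (Finset.mem_range.mp hα)]
      rw [hs]
      simp
    have hprod : (∏ α ∈ range (p + 2), (w α) ^ (bv (2 ^ (p + 1) + j) α))
        = (∏ α ∈ range (p + 1), (w α) ^ (bv j α)) * w (p + 1) := by
      rw [Finset.prod_range_succ, bv_shift_top j (p + 1) hj', pow_one]
      congr 1
      refine Finset.prod_congr rfl fun α hα => ?_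
      rw [bv_shift j α (p + 1) (Finset.mem_range.mp hα)]
    rw [hquad, hlin, hprod]
    have hupd : (∑ α ∈ range (p + 1), (Function.update c p (c p + ((q / 2 : ℕ) : ZMod q))) α * (bv j α : ZMod q))
        = (∑ α ∈ range (p + 1), c α * (bv j α : ZMod q)) + ((q / 2 : ℕ) : ZMod q) * (bv j p : ZMod q) := by
      rw [Finset.sum_range_succ, Finset.sum_range_succ]
      have hs : ∀ α ∈ range p, (Function.update c p (c p + ((q / 2 : ℕ) : ZMod q))) α * (bv j α : ZMod q) = c α * (bv j α : ZMod q) := by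
        intro α hα
        rw [Function.update_of_ne (by have := Finset.mem_range.mp hα; omega)]
      rw [Finset.sum_congr rfl hs, Function.update_self]
      ring
    rw [hupd]
    have harg : ((q / 2 : ℕ) : ZMod q) * (((∑ α ∈ range p, bv j α * bv j (α + 1)) + bv j p : ℕ) : ZMod q)
          + ((∑ α ∈ range (p + 1), c α * (bv j α : ZMod q)) + c (p + 1)) + c0
        = (((q / 2 : ℕ) : ZMod q) * ((∑ α ∈ range p, bv j α * bv j (α + 1) : ℕ) : ZMod q)
          + ((∑ α ∈ range (p + 1), c α * (bv j α : ZMod q)) + ((q / 2 : ℕ) : ZMod q) * (bv j p : ZMod q)) + c0) + c (p + 1) := by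
      push_cast
      ring
    rw [harg, Echr_add q hq1]
    ring

lemma para (A B : ℂ) :
    ‖A + B‖ ^ 2 + ‖A - B‖ ^ 2
      = 2 * ‖A‖ ^ 2 + 2 * ‖B‖ ^ 2 := by
  simp only [Complex.sq_norm, Complex.normSq_apply, Complex.add_re, Complex.add_im,
    Complex.sub_re, Complex.sub_im]
  ring

lemma PS_one (q : ℕ) (w : ℕ → ℂ) (c : ℕ → ZMod q) (c0 : ZMod q) :
    PS q 1 w c c0 = Echr q c0 + Echr q (c 0 + c0) * w 0 := by
  unfold PS
  rw [show (2:ℕ)^1 = 2 from rfl, Finset.sum_range_succ, Finset.sum_range_succ,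
    Finset.sum_range_zero]
  have h0 : bv 0 0 = 0 := rfl
  have h1 : bv 1 0 = 1 := rfl
  simp [h0, h1]

lemma PS_pair (q : ℕ) (hq : Even q) (hq1 : 0 < q) :
    ∀ n, 1 ≤ n → ∀ (w : ℕ → ℂ) (c : ℕ → ZMod q) (c0 : ZMod q),
      (∀ α, ‖w α‖ = 1) →
      ‖PS q n w c c0‖ ^ 2 +
        ‖PS q n w
          (Function.update c (n - 1) (c (n - 1) + ((q / 2 : ℕ) : ZMod q))) c0‖ ^ 2
        = 2 ^ (n + 1) := by
  intro n hn
  induction n, hn using Nat.le_induction with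
  | base =>
    intro w c c0 hw
    simp only [Nat.sub_self]
    rw [PS_one, PS_one]
    have hupd0 : (Function.update c 0 (c 0 + ((q / 2 : ℕ) : ZMod q))) 0 = c 0 + ((q / 2 : ℕ) : ZMod q) := Function.update_self _ _ _
    rw [hupd0]
    have key : Echr q (c 0 + ((q / 2 : ℕ) : ZMod q) + c0) = -(Echr q (c 0 + c0)) := by
      have hcomm : c 0 + ((q / 2 : ℕ) : ZMod q) + c0 = (c 0 + c0) + ((q / 2 : ℕ) : ZMod q) := by
        ring
      rw [hcomm, Echr_add q hq1, Echr_half q hq hq1]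
      ring
    rw [key]
    have hrw : Echr q c0 + -(Echr q (c 0 + c0)) * w 0
        = Echr q c0 - Echr q (c 0 + c0) * w 0 := by ring
    rw [hrw, para, Echr_abs]
    have h2' : ‖Echr q (c 0 + c0) * w 0‖ = 1 := by
      rw [norm_mul, Echr_abs, hw 0, one_mul]
    rw [h2']
    norm_num
  | succ n hn ih =>
    intro w c c0 hw
    obtain ⟨p, rfl⟩ : ∃ p, n = p + 1 := ⟨n - 1, by omega⟩
    simp only [Nat.add_sub_cancel] at ih ⊢
    set h2 := ((q / 2 : ℕ) : ZMod q) with hh2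
    set A := PS q (p + 1) w c c0 with hA
    set B := PS q (p + 1) w (Function.update c p (c p + h2)) c0 with hB
    set u := w (p + 1) * Echr q (c (p + 1)) with hu
    have e1 : PS q (p + 2) w c c0 = A + u * B := PS_succ q p hq1 w c c0
    have e2 : PS q (p + 2) w (Function.update c (p + 1) (c (p + 1) + h2)) c0
        = A - u * B := by
      set c'' := Function.update c (p + 1) (c (p + 1) + h2) with hc''
      rw [PS_succ q p hq1 w c'' c0]
      have g1 : PS q (p + 1) w c'' c0 = A := by
        apply PS_congr
        intro α hα
        rw [hc'', Function.update_of_ne (by omega)]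
      have g2 : PS q (p + 1) w (Function.update c'' p (c'' p + h2)) c0 = B := by
        apply PS_congr
        intro α hα
        by_cases hαn : α = p
        · subst hαn
          rw [Function.update_self, Function.update_self, hc'',
            Function.update_of_ne (by omega)]
        · rw [Function.update_of_ne hαn, Function.update_of_ne hαn, hc'',
            Function.update_of_ne (by omega)]
      have g3 : Echr q (c'' (p + 1)) = - Echr q (c (p + 1)) := by
        rw [hc'', Function.update_self, Echr_add q hq1, Echr_half q hq hq1]
        ring
      rw [g1, g2, g3]
      ring
    have e1' : PS q (p + 1 + 1) w c c0 = A + u * B := e1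
    have e2' : PS q (p + 1 + 1) w (Function.update c (p + 1) (c (p + 1) + h2)) c0 = A - u * B := e2
    rw [e1', e2', para]
    have hub : ‖u * B‖ ^ 2 = ‖B‖ ^ 2 := by
      rw [norm_mul, hu, norm_mul, hw (p + 1), Echr_abs, one_mul, one_mul]
    rw [hub]
    have hih := ih w c c0 hw
    rw [← hA, ← hB] at hih
    calc 2 * ‖A‖ ^ 2 + 2 * ‖B‖ ^ 2
        = 2 * (‖A‖ ^ 2 + ‖B‖ ^ 2) := by ring
      _ = 2 * 2 ^ (p + 1 + 1) := by rw [hih]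
      _ = 2 ^ (p + 1 + 1 + 1) := by ring

lemma PS_bound (q : ℕ) (hq : Even q) (hq1 : 0 < q) (n : ℕ) (w : ℕ → ℂ) (c : ℕ → ZMod q)
    (c0 : ZMod q) (hw : ∀ α, ‖w α‖ = 1) :
    ‖PS q n w c c0‖ ^ 2 ≤ 2 ^ (n + 1) := by
  rcases Nat.eq_zero_or_pos n with rfl | hn
  · unfold PS
    simp [Echr_abs]
  · have := PS_pair q hq hq1 n hn w c c0 hw
    nlinarith [sq_nonneg (‖PS q n w (Function.update c (n - 1) (c (n - 1) + ((q / 2 : ℕ) : ZMod q))) c0‖)]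


lemma zpow_encv (m : ℕ) (z : ℂ) (v : Fin m → ZMod 2) :
    z ^ (encv m v) = ∏ p : Fin m, (z ^ (2 ^ (p.val))) ^ ((v p).val) := by
  unfold encv
  rw [← Finset.prod_pow_eq_pow_sum]
  rw [← Fin.prod_univ_eq_prod_range
    (fun p => z ^ ((if h : p < m then (v ⟨p, h⟩).val else 0) * 2 ^ p)) m]
  refine Finset.prod_congr rfl fun p _ => ?_
  rw [dif_pos p.isLt, Fin.eta, mul_comm, pow_mul]


/-- Corollary 1: if there is a set of `k` variables `x = (x_{j_0},…,x_{j_{k-1}})` such that for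
each `d ∈ ℤ₂^k` the restriction `f|_{x=d}` equals
`(q/2)·∑_α x_{π_d(α)}x_{π_d(α+1)} + ∑_α c_{d,α} x_{i_α} + c_d` for some bijection `π_d`
of `{0,…,m-k-1}` onto `I`, then the polyphase vector of `f` has PMEPR at most `2^{k+1}`:
the envelope power never exceeds `2^{k+1}·2^m`. -/
theorem stmt_4 (q m k : ℕ) (hq : Even q) (hq1 : 0 < q) (hkm : k ≤ m)
    (iI : ℕ → Fin m) (jJ : Fin k → Fin m)
    (hiInj : Set.InjOn iI (Set.Iio (m - k))) (hjInj : Function.Injective jJ)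
    (hdisj : ∀ a < m - k, ∀ b : Fin k, iI a ≠ jJ b)
    (hcover : ∀ v : Fin m, (∃ a < m - k, iI a = v) ∨ ∃ b : Fin k, jJ b = v)
    (f : (Fin m → ZMod 2) → ZMod q)
    (π : (Fin k → ZMod 2) → ℕ → Fin m)
    (hπInj : ∀ d, Set.InjOn (π d) (Set.Iio (m - k)))
    (hπrange : ∀ d, (π d) '' Set.Iio (m - k) = iI '' Set.Iio (m - k))
    (c : (Fin k → ZMod 2) → ℕ → ZMod q) (c0 : (Fin k → ZMod 2) → ZMod q)
    (hf : ∀ d : Fin k → ZMod 2, ∀ y : Fin m → ZMod 2, (∀ b : Fin k, y (jJ b) = d b) →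
      f y = ((q / 2 : ℕ) : ZMod q) *
              ((∑ α ∈ Finset.range (m - k - 1),
                  (y (π d α)).val * (y (π d (α + 1))).val : ℕ) : ZMod q)
            + (∑ α ∈ Finset.range (m - k), c d α * ((y (iI α)).val : ZMod q)) + c0 d)
    (fc T t : ℝ) (hT : 0 < T) (ht0 : 0 ≤ t) (htT : t < T) :
    ‖∑ i ∈ Finset.range (2 ^ m),
        polyVec m f i *
          Complex.exp (2 * Real.pi * Complex.I * ((fc : ℂ) + (i : ℂ) / (T : ℂ)) * (t : ℂ))‖ ^ 2
      ≤ (2 : ℝ) ^ (k + 1) * (2 : ℝ) ^ m := by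
  classical
  set n := m - k with hn
  set z : ℂ := Complex.exp (2 * Real.pi * Complex.I * (t : ℂ) / (T : ℂ)) with hz
  set U : ℂ := Complex.exp (2 * Real.pi * Complex.I * (fc : ℂ) * (t : ℂ)) with hU
  have hzabs : ‖z‖ = 1 := by
    have hzz : z = Complex.exp ((2 * Real.pi * t / T : ℝ) * Complex.I) := by
      rw [hz]; congr 1; push_cast; ring
    rw [hzz, Complex.norm_exp_ofReal_mul_I]
  have hUabs : ‖U‖ = 1 := by
    have hUU : U = Complex.exp ((2 * Real.pi * fc * t : ℝ) * Complex.I) := by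
      rw [hU]; congr 1; push_cast; ring
    rw [hUU, Complex.norm_exp_ofReal_mul_I]
  -- Step 1 : factor each summand
  have step1 : ∀ i : ℕ,
      polyVec m f i *
          Complex.exp (2 * Real.pi * Complex.I * ((fc : ℂ) + (i : ℂ) / (T : ℂ)) * (t : ℂ))
        = U * (Echr q (f (bits m i)) * z ^ i) := by
    intro i
    have h1 : polyVec m f i = Echr q (f (bits m i)) := rfl
    have h0 : (2 : ℂ) * Real.pi * Complex.I * ((fc : ℂ) + (i : ℂ) / (T : ℂ)) * (t : ℂ)
        = 2 * Real.pi * Complex.I * (fc : ℂ) * (t : ℂ)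
          + (i : ℕ) * (2 * Real.pi * Complex.I * (t : ℂ) / (T : ℂ)) := by
      push_cast; ring
    rw [h1, h0, Complex.exp_add, Complex.exp_nat_mul, ← hU, ← hz]
    ring
  rw [Finset.sum_congr rfl (fun i _ => step1 i), ← Finset.mul_sum]
  -- the combining bijection
  set comb : ((Fin k → ZMod 2) × (Fin n → ZMod 2)) → (Fin m → ZMod 2) := fun du p =>
    if h : ∃ b, jJ b = p then du.1 h.choose
    else if h' : ∃ a, a < n ∧ π du.1 a = p then du.2 ⟨h'.choose, h'.choose_spec.1⟩ else 0
    with hcombdef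
  have hcomb1 : ∀ d u b, comb (d, u) (jJ b) = d b := by
    intro d u b
    have hex : ∃ b', jJ b' = jJ b := ⟨b, rfl⟩
    simp only [hcombdef, dif_pos hex]
    exact congrArg d (hjInj hex.choose_spec)
  have hπmem : ∀ d a, a < n → ∃ a', a' < n ∧ iI a' = π d a := by
    intro d a ha
    have hmem : π d a ∈ iI '' Set.Iio n := by
      rw [← hπrange d]; exact ⟨a, ha, rfl⟩
    obtain ⟨a', ha', he⟩ := hmem
    exact ⟨a', ha', he⟩
  have hcomb2 : ∀ d u a (ha : a < n), comb (d, u) (π d a) = u ⟨a, ha⟩ := by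
    intro d u a ha
    have hnex : ¬ ∃ b, jJ b = π d a := by
      rintro ⟨b, hb⟩
      obtain ⟨a', ha', he⟩ := hπmem d a ha
      exact hdisj a' ha' b (he.trans hb.symm)
    have hex : ∃ a', a' < n ∧ π d a' = π d a := ⟨a, ha, rfl⟩
    simp only [hcombdef, dif_neg hnex, dif_pos hex]
    have heq : hex.choose = a := hπInj d hex.choose_spec.1 ha hex.choose_spec.2
    exact congrArg u (Fin.ext heq)
  have hcombInj : Function.Injective comb := by
    rintro ⟨d, u⟩ ⟨d', u'⟩ h
    have hd : d = d' := by
      funext b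
      rw [← hcomb1 d u b, ← hcomb1 d' u' b, h]
    subst hd
    have hu : u = u' := by
      funext a
      have h1 := congrFun h (π d a.val)
      rw [hcomb2 d u a.val a.isLt, hcomb2 d u' a.val a.isLt] at h1
      simpa using h1
    rw [hu]
  have hcard : Fintype.card ((Fin k → ZMod 2) × (Fin n → ZMod 2))
      = Fintype.card (Fin m → ZMod 2) := by
    rw [Fintype.card_prod, Fintype.card_fun, Fintype.card_fun, Fintype.card_fun]
    simp only [ZMod.card, Fintype.card_fin]
    rw [← pow_add]
    congr 1
    omega
  have hcombBij : Function.Bijective comb :=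
    (Fintype.bijective_iff_injective_and_card comb).mpr ⟨hcombInj, hcard⟩
  -- Step 2 : transport the sum to bit-vector space and split
  have step2 : (∑ i ∈ Finset.range (2 ^ m), Echr q (f (bits m i)) * z ^ i)
      = ∑ du : (Fin k → ZMod 2) × (Fin n → ZMod 2),
          Echr q (f (comb du)) * z ^ (encv m (comb du)) := by
    rw [sum_range_two_pow m (fun i => Echr q (f (bits m i)) * z ^ i)]
    rw [← Fintype.sum_bijective comb hcombBij
      (fun du => Echr q (f (bits m (encv m (comb du)))) * z ^ (encv m (comb du)))
      (fun v => Echr q (f (bits m (encv m v))) * z ^ (encv m v)) (fun du => rfl)]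
    exact Fintype.sum_congr _ _ fun du => by rw [bits_encv]
  rw [step2, Fintype.sum_prod_type]
  -- data for the fixed-d inner sums
  set w' : (Fin k → ZMod 2) → ℕ → ℂ := fun d a => z ^ (2 ^ ((π d a).val)) with hw'def
  set K : (Fin k → ZMod 2) → ℂ :=
    fun d => ∏ b : Fin k, (z ^ (2 ^ ((jJ b).val))) ^ ((d b).val) with hKdef
  set τ : (Fin k → ZMod 2) → ℕ → ℕ :=
    fun d β => if h : ∃ α, α < n ∧ iI α = π d β then h.choose else 0 with hτdef
  set cc : (Fin k → ZMod 2) → ℕ → ZMod q := fun d β => c d (τ d β) with hccdef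
  have hiImem : ∀ d a, a < n → ∃ a', a' < n ∧ π d a' = iI a := by
    intro d a ha
    have hmem : iI a ∈ (π d) '' Set.Iio n := by
      rw [hπrange d]; exact ⟨a, ha, rfl⟩
    obtain ⟨a', ha', he⟩ := hmem
    exact ⟨a', ha', he⟩
  -- linear-term reindexing
  have hlinre : ∀ d (v : Fin m → ZMod 2),
      (∑ α ∈ Finset.range n, c d α * ((v (iI α)).val : ZMod q))
        = ∑ β ∈ Finset.range n, cc d β * ((v (π d β)).val : ZMod q) := by
    intro d v
    refine Finset.sum_nbij'
      (i := fun α => if h : ∃ β, β < n ∧ π d β = iI α then h.choose else 0)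
      (j := fun β => τ d β) ?_ ?_ ?_ ?_ ?_
    · intro a ha
      have hex : ∃ β, β < n ∧ π d β = iI a := hiImem d a (Finset.mem_range.mp ha)
      simp only [dif_pos hex]
      exact Finset.mem_range.mpr hex.choose_spec.1
    · intro b hb
      have hex : ∃ α, α < n ∧ iI α = π d b := hπmem d b (Finset.mem_range.mp hb)
      simp only [hτdef, dif_pos hex]
      exact Finset.mem_range.mpr hex.choose_spec.1
    · intro a ha
      have hex : ∃ β, β < n ∧ π d β = iI a := hiImem d a (Finset.mem_range.mp ha)
      simp only [dif_pos hex, hτdef]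
      have hex2 : ∃ α, α < n ∧ iI α = π d hex.choose := ⟨a, Finset.mem_range.mp ha, hex.choose_spec.2.symm⟩
      simp only [dif_pos hex2]
      exact hiInj hex2.choose_spec.1 (Finset.mem_range.mp ha)
        (hex2.choose_spec.2.trans hex.choose_spec.2)
    · intro b hb
      have hex : ∃ α, α < n ∧ iI α = π d b := hπmem d b (Finset.mem_range.mp hb)
      simp only [hτdef, dif_pos hex]
      have hex2 : ∃ β, β < n ∧ π d β = iI hex.choose := ⟨b, Finset.mem_range.mp hb, hex.choose_spec.2.symm⟩
      simp only [dif_pos hex2]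
      exact hπInj d hex2.choose_spec.1 (Finset.mem_range.mp hb)
        (hex2.choose_spec.2.trans hex.choose_spec.2)
    · intro a ha
      have hex : ∃ β, β < n ∧ π d β = iI a := hiImem d a (Finset.mem_range.mp ha)
      simp only [dif_pos hex, hccdef, hτdef]
      have hex2 : ∃ α, α < n ∧ iI α = π d hex.choose := ⟨a, Finset.mem_range.mp ha, hex.choose_spec.2.symm⟩
      simp only [dif_pos hex2]
      have h1 : hex2.choose = a := hiInj hex2.choose_spec.1 (Finset.mem_range.mp ha)
        (hex2.choose_spec.2.trans hex.choose_spec.2)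
      rw [h1, hex.choose_spec.2]
  -- product splitting
  have hprodsplit : ∀ d (u : Fin n → ZMod 2),
      (∏ p : Fin m, (z ^ (2 ^ (p.val))) ^ ((comb (d, u) p).val))
        = K d * ∏ a : Fin n, (w' d a.val) ^ ((u a).val) := by
    intro d u
    set Sj : Finset (Fin m) := Finset.univ.image jJ with hSj
    set Si : Finset (Fin m) := (Finset.range n).image (fun a => π d a) with hSi
    have huniv : (Finset.univ : Finset (Fin m)) = Sj ∪ Si := by
      ext p
      simp only [Finset.mem_univ, true_iff, Finset.mem_union, hSj, hSi,
        Finset.mem_image, Finset.mem_range]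
      rcases hcover p with ⟨a, ha, he⟩ | ⟨b, he⟩
      · right
        obtain ⟨a', ha', he'⟩ := hiImem d a ha
        exact ⟨a', ha', by rw [he']; exact he⟩
      · exact Or.inl ⟨b, trivial, he⟩
    have hdisjoint : Disjoint Sj Si := by
      rw [Finset.disjoint_left]
      intro p hpj hpi
      simp only [hSj, Finset.mem_image, Finset.mem_univ, true_and] at hpj
      simp only [hSi, Finset.mem_image, Finset.mem_range] at hpi
      obtain ⟨b, hb⟩ := hpj
      obtain ⟨a, ha, hape⟩ := hpi
      obtain ⟨a', ha', he'⟩ := hπmem d a ha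
      exact hdisj a' ha' b (by rw [he', hape, hb])
    rw [show (Finset.univ : Finset (Fin m)) = Sj ∪ Si from huniv,
      Finset.prod_union hdisjoint]
    congr 1
    · rw [hSj, Finset.prod_image (fun x _ y _ h => hjInj h)]
      refine Finset.prod_congr rfl fun b _ => ?_
      rw [hcomb1 d u b]
    · rw [hSi, Finset.prod_image (fun x hx y hy h =>
        hπInj d (Finset.mem_range.mp hx) (Finset.mem_range.mp hy) h)]
      refine Finset.prod_bij' (fun a ha => (⟨a, Finset.mem_range.mp ha⟩ : Fin n))
        (fun a _ => a.val) (fun a ha => Finset.mem_univ _)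
        (fun a _ => Finset.mem_range.mpr a.isLt) (fun a ha => rfl)
        (fun a _ => rfl) ?_
      intro a ha
      have han : a < n := Finset.mem_range.mp ha
      rw [hcomb2 d u a han]
  -- the fibre sums are Golay path sums
  have hub : ∀ (u : Fin n → ZMod 2) (a : Fin n), (u a).val = bv (encv n u) a.val := by
    intro u a
    have h := bits_val n (encv n u) a
    rw [bits_encv n u] at h
    exact h
  have step3 : ∀ d, (∑ u : Fin n → ZMod 2, Echr q (f (comb (d, u))) * z ^ (encv m (comb (d, u))))
      = K d * PS q n (w' d) (cc d) (c0 d) := by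
    intro d
    have hptw : ∀ u : Fin n → ZMod 2,
        Echr q (f (comb (d, u))) * z ^ (encv m (comb (d, u)))
          = K d * (Echr q (((q / 2 : ℕ) : ZMod q) *
                ((∑ α ∈ Finset.range (n - 1), bv (encv n u) α * bv (encv n u) (α + 1) : ℕ) : ZMod q)
              + (∑ α ∈ Finset.range n, cc d α * ((bv (encv n u) α : ℕ) : ZMod q)) + c0 d)
            * ∏ α ∈ Finset.range n, (w' d α) ^ (bv (encv n u) α)) := by
      intro u
      have hval : ∀ a, a < n → ((comb (d, u)) (π d a)).val = bv (encv n u) a := by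
        intro a ha
        rw [hcomb2 d u a ha]
        exact hub u ⟨a, ha⟩
      have hfy : f (comb (d, u)) = ((q / 2 : ℕ) : ZMod q) *
            ((∑ α ∈ Finset.range (n - 1), bv (encv n u) α * bv (encv n u) (α + 1) : ℕ) : ZMod q)
          + (∑ α ∈ Finset.range n, cc d α * ((bv (encv n u) α : ℕ) : ZMod q)) + c0 d := by
        rw [hf d (comb (d, u)) (fun b => hcomb1 d u b)]
        have hquad : (∑ α ∈ Finset.range (n - 1),
              ((comb (d, u)) (π d α)).val * ((comb (d, u)) (π d (α + 1))).val)
            = ∑ α ∈ Finset.range (n - 1), bv (encv n u) α * bv (encv n u) (α + 1) := by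
          refine Finset.sum_congr rfl fun α hα => ?_
          have hα1 : α < n - 1 := Finset.mem_range.mp hα
          rw [hval α (by omega), hval (α + 1) (by omega)]
        have hlin2 : (∑ α ∈ Finset.range n, c d α * (((comb (d, u)) (iI α)).val : ZMod q))
            = ∑ α ∈ Finset.range n, cc d α * ((bv (encv n u) α : ℕ) : ZMod q) := by
          rw [hlinre d (comb (d, u))]
          refine Finset.sum_congr rfl fun β hβ => ?_
          rw [hval β (Finset.mem_range.mp hβ)]
        rw [hquad, hlin2]
      have hzp : z ^ (encv m (comb (d, u)))
          = K d * ∏ α ∈ Finset.range n, (w' d α) ^ (bv (encv n u) α) := by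
        rw [zpow_encv m z (comb (d, u)), hprodsplit d u]
        congr 1
        rw [← Fin.prod_univ_eq_prod_range (fun a => (w' d a) ^ (bv (encv n u) a)) n]
        refine Finset.prod_congr rfl fun a _ => ?_
        rw [hub u a]
      rw [hfy, hzp]
      ring
    rw [Fintype.sum_congr _ _ hptw, ← Finset.mul_sum]
    congr 1
    rw [show PS q n (w' d) (cc d) (c0 d)
        = ∑ j ∈ Finset.range (2 ^ n),
            Echr q (((q / 2 : ℕ) : ZMod q) *
                ((∑ α ∈ Finset.range (n - 1), bv j α * bv j (α + 1) : ℕ) : ZMod q)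
              + (∑ α ∈ Finset.range n, cc d α * ((bv j α : ℕ) : ZMod q)) + c0 d)
            * ∏ α ∈ Finset.range n, (w' d α) ^ (bv j α) from rfl]
    rw [sum_range_two_pow n (fun j =>
      Echr q (((q / 2 : ℕ) : ZMod q) *
          ((∑ α ∈ Finset.range (n - 1), bv j α * bv j (α + 1) : ℕ) : ZMod q)
        + (∑ α ∈ Finset.range n, cc d α * ((bv j α : ℕ) : ZMod q)) + c0 d)
      * ∏ α ∈ Finset.range n, (w' d α) ^ (bv j α))]
  rw [Finset.sum_congr rfl (fun d _ => step3 d)]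
  -- final estimates
  have hw'abs : ∀ d α, ‖w' d α‖ = 1 := by
    intro d α
    rw [hw'def]
    simp only [norm_pow, hzabs, one_pow]
  have hKabs : ∀ d, ‖K d‖ = 1 := by
    intro d
    rw [hKdef]
    simp only [norm_prod, norm_pow, hzabs, one_pow]
    exact Finset.prod_const_one
  have habs1 : ‖U * ∑ d : Fin k → ZMod 2, K d * PS q n (w' d) (cc d) (c0 d)‖
      ≤ ∑ d : Fin k → ZMod 2, ‖PS q n (w' d) (cc d) (c0 d)‖ := by
    rw [norm_mul, hUabs, one_mul]
    refine le_trans (norm_sum_le _ _) ?_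
    refine Finset.sum_le_sum fun d _ => ?_
    rw [norm_mul, hKabs d, one_mul]
  have hcardk : ((Finset.univ : Finset (Fin k → ZMod 2)).card : ℝ) = 2 ^ k := by
    rw [Finset.card_univ, Fintype.card_fun]
    simp [ZMod.card]
  have hsq : ‖U * ∑ d : Fin k → ZMod 2, K d * PS q n (w' d) (cc d) (c0 d)‖ ^ 2
      ≤ (∑ d : Fin k → ZMod 2, ‖PS q n (w' d) (cc d) (c0 d)‖) ^ 2 := by
    apply pow_le_pow_left₀ (norm_nonneg _) habs1
  refine le_trans hsq ?_
  have hcs := sq_sum_le_card_mul_sum_sq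
    (s := (Finset.univ : Finset (Fin k → ZMod 2)))
    (f := fun d => ‖PS q n (w' d) (cc d) (c0 d)‖)
  refine le_trans hcs ?_
  have hsum : ∑ d : Fin k → ZMod 2, ‖PS q n (w' d) (cc d) (c0 d)‖ ^ 2
      ≤ ∑ _d : Fin k → ZMod 2, (2 : ℝ) ^ (n + 1) :=
    Finset.sum_le_sum fun d _ => PS_bound q hq hq1 n (w' d) (cc d) (c0 d) (hw'abs d)
  have hconst : ∑ _d : Fin k → ZMod 2, (2 : ℝ) ^ (n + 1) = 2 ^ k * 2 ^ (n + 1) := by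
    rw [Finset.sum_const, nsmul_eq_mul, hcardk]
  calc ((Finset.univ : Finset (Fin k → ZMod 2)).card : ℝ)
        * ∑ d : Fin k → ZMod 2, ‖PS q n (w' d) (cc d) (c0 d)‖ ^ 2
      ≤ 2 ^ k * (2 ^ k * 2 ^ (n + 1)) := by
        rw [hcardk]
        apply mul_le_mul_of_nonneg_left _ (by positivity)
        rw [← hconst]
        exact hsum
    _ = (2 : ℝ) ^ (k + 1) * (2 : ℝ) ^ m := by
        rw [← pow_add, ← pow_add, ← pow_add]
        congr 1
        omega
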